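/- arXiv:1305.6534 — 2 statements merged into one kernel-verified Lean document; each statement's English description precedes it below -/
import Mathlib

section
/- The odd Farey graph 𝓕_odd is a tree, i.e., it is connected and contains no cycles. -/
/-- A vertex of the odd Farey graph: a pair `(s, t)` of coprime integers with `s` odd,
such that either `t > 0` (representing the irreducible rational `s/t` with odd numerator)
or `t = 0` and `s = 1` (representing `∞ = 1/0`). -/
def FareyOddVertex : Type :=
  {p : ℤ × ℤ // Odd p.1 ∧ IsCoprime p.1 p.2 ∧ (0 < p.2 ∨ (p.2 = 0 ∧ p.1 = 1))}

/-- The odd Farey graph: two distinct vertices `(s₁, t₁)` and `(s₂, t₂)` are adjacent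
if and only if `|s₁·t₂ − s₂·t₁| = 1`. -/
def fareyOdd : SimpleGraph FareyOddVertex where
  Adj v w := v ≠ w ∧ |v.1.1 * w.1.2 - w.1.1 * v.1.2| = 1
  symm := by
    constructor
    rintro v w ⟨hne, h⟩
    exact ⟨hne.symm, by rw [abs_sub_comm]; exact h⟩
  loopless := by
    constructor
    rintro v ⟨hne, -⟩
    exact hne rfl

namespace FareyProof

open SimpleGraph

instance : DecidableEq FareyOddVertex :=
  fun a b => decidable_of_iff (a.val = b.val) (by exact Subtype.ext_iff.symm)

def root : FareyOddVertex := ⟨(1, 0), ⟨odd_one, isCoprime_one_left, Or.inr ⟨rfl, rfl⟩⟩⟩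

lemma t_nonneg (v : FareyOddVertex) : 0 ≤ v.1.2 := by
  rcases v.2.2.2 with h | ⟨h, _⟩ <;> omega

lemma eq_root (v : FareyOddVertex) (h : v.1.2 = 0) : v = root := by
  rcases v.2.2.2 with h' | ⟨h1, h2⟩
  · omega
  · exact Subtype.ext (Prod.ext_iff.mpr ⟨h2, h1⟩)

lemma adj_iff {v w : FareyOddVertex} :
    fareyOdd.Adj v w ↔ v ≠ w ∧ |v.1.1 * w.1.2 - w.1.1 * v.1.2| = 1 := Iff.rfl

/-- Adjacent vertices have distinct denominators. -/
lemma adj_t_ne {v w : FareyOddVertex} (h : fareyOdd.Adj v w) : v.1.2 ≠ w.1.2 := by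
  obtain ⟨hne, habs⟩ := adj_iff.mp h
  intro heq
  have h1 : v.1.1 * w.1.2 - w.1.1 * v.1.2 = (v.1.1 - w.1.1) * v.1.2 := by rw [heq]; ring
  rw [h1, abs_mul] at habs
  rcases Int.mul_eq_one_iff_eq_one_or_neg_one.mp habs with ⟨ha, hb⟩ | ⟨ha, hb⟩
  · obtain ⟨k, hk⟩ := v.2.1
    obtain ⟨l, hl⟩ := w.2.1
    rcases abs_eq (by norm_num : (0:ℤ) ≤ 1) |>.mp ha with h2 | h2 <;> omega
  · have := abs_nonneg ((v.1.1 : ℤ) - w.1.1)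
    omega

private lemma dvd_small' {t x : ℤ} (ht : 0 < t) (h : t ∣ x) (hb1 : -t < x) (hb2 : x < t) :
    x = 0 := by
  obtain ⟨c, rfl⟩ := h
  rcases lt_trichotomy c 0 with hc | hc | hc
  · nlinarith
  · simp [hc]
  · nlinarith

private lemma dvd_small {t x : ℤ} (ht : 0 < t) (h : t ∣ x) (h0 : 0 ≤ x) (h2 : x < 2 * t) :
    x = 0 ∨ x = t := by
  obtain ⟨c, rfl⟩ := h
  rcases lt_trichotomy c 0 with hc | hc | hc
  · nlinarith
  · left; simp [hc]
  · rcases eq_or_lt_of_le (by omega : (1:ℤ) ≤ c) with h1 | h1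
    · right; rw [← h1, mul_one]
    · exfalso; nlinarith

/-- A vertex has at most one neighbour with smaller denominator. -/
lemma parent_unique {v w₁ w₂ : FareyOddVertex} (h₁ : fareyOdd.Adj v w₁)
    (h₂ : fareyOdd.Adj v w₂) (l₁ : w₁.1.2 < v.1.2) (l₂ : w₂.1.2 < v.1.2) : w₁ = w₂ := by
  have hs : Odd v.1.1 := v.2.1
  have hco : IsCoprime v.1.1 v.1.2 := v.2.2.1
  have hr₁ : 0 ≤ w₁.1.2 := t_nonneg w₁
  have hr₂ : 0 ≤ w₂.1.2 := t_nonneg w₂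
  have ht : 0 < v.1.2 := lt_of_le_of_lt hr₁ l₁
  obtain ⟨hne₁, hd₁⟩ := adj_iff.mp h₁
  obtain ⟨hne₂, hd₂⟩ := adj_iff.mp h₂
  have ho₁ : Odd w₁.1.1 := w₁.2.1
  have ho₂ : Odd w₂.1.1 := w₂.2.1
  have e₁ := (abs_eq (by norm_num : (0:ℤ) ≤ 1)).mp hd₁
  have e₂ := (abs_eq (by norm_num : (0:ℤ) ≤ 1)).mp hd₂
  -- helper for the "same sign" case
  have same : v.1.1 * w₁.1.2 - w₁.1.1 * v.1.2 = v.1.1 * w₂.1.2 - w₂.1.1 * v.1.2 → w₁ = w₂ := by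
    intro he
    have hdvd : v.1.2 ∣ v.1.1 * (w₁.1.2 - w₂.1.2) :=
      ⟨w₁.1.1 - w₂.1.1, by linear_combination he⟩
    have hdvd2 : v.1.2 ∣ (w₁.1.2 - w₂.1.2) := hco.symm.dvd_of_dvd_mul_left hdvd
    have hr : w₁.1.2 - w₂.1.2 = 0 :=
      dvd_small' ht hdvd2 (by omega) (by omega)
    have hu : w₁.1.1 * v.1.2 = w₂.1.1 * v.1.2 := by linear_combination v.1.1 * hr - he
    have hu2 : w₁.1.1 = w₂.1.1 := mul_right_cancel₀ (by omega) hu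
    exact Subtype.ext (Prod.ext_iff.mpr ⟨hu2, by omega⟩)
  -- helper for the "opposite sign" case
  have opp : v.1.1 * w₁.1.2 - w₁.1.1 * v.1.2 = -(v.1.1 * w₂.1.2 - w₂.1.1 * v.1.2) → w₁ = w₂ := by
    intro he
    have hdvd : v.1.2 ∣ v.1.1 * (w₁.1.2 + w₂.1.2) :=
      ⟨w₁.1.1 + w₂.1.1, by linear_combination he⟩
    have hdvd2 : v.1.2 ∣ (w₁.1.2 + w₂.1.2) := hco.symm.dvd_of_dvd_mul_left hdvd
    rcases dvd_small ht hdvd2 (by omega) (by omega) with h0 | hT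
    · -- both denominators are 0, so both are the point at infinity
      have hz₁ : w₁.1.2 = 0 := by omega
      have hz₂ : w₂.1.2 = 0 := by omega
      rw [eq_root w₁ hz₁, eq_root w₂ hz₂]
    · -- v.1.1 = w₁.1.1 + w₂.1.1 : odd = even, contradiction
      exfalso
      have : v.1.1 * v.1.2 = (w₁.1.1 + w₂.1.1) * v.1.2 := by
        linear_combination he - v.1.1 * hT
      have hsum : v.1.1 = w₁.1.1 + w₂.1.1 := mul_right_cancel₀ (by omega) this
      obtain ⟨k, hk⟩ := hs
      obtain ⟨a, ha⟩ := ho₁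
      obtain ⟨b, hb⟩ := ho₂
      omega
  rcases e₁ with p₁ | p₁ <;> rcases e₂ with p₂ | p₂
  · exact same (by omega)
  · exact opp (by omega)
  · exact opp (by omega)
  · exact same (by omega)

/-- Every vertex with positive denominator has a neighbour with smaller denominator. -/
lemma exists_parent (v : FareyOddVertex) (ht : 0 < v.1.2) :
    ∃ w : FareyOddVertex, fareyOdd.Adj v w ∧ w.1.2 < v.1.2 := by
  have hs : Odd v.1.1 := v.2.1
  obtain ⟨a, b, hab⟩ := v.2.2.1
  by_cases h1 : v.1.2 = 1
  · refine ⟨root, adj_iff.mpr ⟨?_, ?_⟩, by simp [root]; omega⟩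
    · intro h
      have : v.1.2 = (0:ℤ) := by rw [h]; rfl
      omega
    · show |v.1.1 * (0:ℤ) - 1 * v.1.2| = 1
      rw [h1]; norm_num
  · -- v.1.2 ≥ 2
    have ht2 : 2 ≤ v.1.2 := by omega
    set s := v.1.1 with hsdef
    set t := v.1.2 with htdef
    set r := a % t with hrdef
    have hr0 : 0 ≤ r := Int.emod_nonneg a (by omega)
    have hrt : r < t := Int.emod_lt_of_pos a ht
    have hdvd : t ∣ s * r - 1 := by
      have h2 : t ∣ a - r := by
        rw [hrdef, Int.emod_def]; ring_nf
        exact ⟨a / t, by ring⟩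
      have he : s * r - 1 = -s * (a - r) - b * t := by linear_combination hab
      rw [he]
      exact dvd_sub (h2.mul_left _) ((dvd_refl t).mul_left b)
    obtain ⟨u, hu⟩ := hdvd
    have key : s * r - u * t = 1 := by linear_combination hu
    have hrne : r ≠ 0 := by
      intro h0
      rw [h0, mul_zero] at key
      have : t ∣ 1 := ⟨-u, by linarith⟩
      have := Int.le_of_dvd one_pos this
      omega
    have hrpos : 0 < r := lt_of_le_of_ne hr0 (Ne.symm hrne)
    by_cases hpar : Odd u
    · refine ⟨⟨(u, r), hpar, ⟨-t, s, by linear_combination key⟩, Or.inl hrpos⟩, ?_, ?_⟩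
      · refine adj_iff.mpr ⟨?_, ?_⟩
        · intro h
          have : t = r := congrArg (fun x : FareyOddVertex => x.1.2) h
          omega
        · show |s * r - u * t| = 1
          rw [key]; norm_num
      · exact hrt
    · have hue : Even u := Int.not_odd_iff_even.mp hpar
      have hodd : Odd (s - u) := hs.sub_even hue
      refine ⟨⟨(s - u, t - r), hodd, ⟨t, -s, by linear_combination key⟩, Or.inl (by omega)⟩,
        ?_, ?_⟩
      · refine adj_iff.mpr ⟨?_, ?_⟩
        · intro h
          have : t = t - r := congrArg (fun x : FareyOddVertex => x.1.2) h
          omega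
        · show |s * (t - r) - (s - u) * t| = 1
          have : s * (t - r) - (s - u) * t = -1 := by linear_combination -key
          rw [this]; norm_num
      · show t - r < t
        omega

lemma reachable_root : ∀ (n : ℕ) (v : FareyOddVertex), v.1.2.toNat = n →
    fareyOdd.Reachable v root := by
  intro n
  induction n using Nat.strong_induction_on with
  | _ n ih =>
    intro v hn
    rcases eq_or_lt_of_le (t_nonneg v) with h0 | hpos
    · rw [eq_root v h0.symm]
    · obtain ⟨w, hadj, hlt⟩ := exists_parent v hpos
      have hw0 : 0 ≤ w.1.2 := t_nonneg w
      have hlt' : w.1.2.toNat < n := by omega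
      exact hadj.reachable.trans (ih _ hlt' w rfl)

lemma connected : fareyOdd.Connected := by
  rw [connected_iff]
  exact ⟨fun a b => (reachable_root _ a rfl).trans (reachable_root _ b rfl).symm, ⟨root⟩⟩

lemma max_cycle_aux {u : FareyOddVertex} (c : fareyOdd.Walk u u) (hc : c.IsCycle)
    (hmax : ∀ x ∈ c.support, x.1.2 ≤ u.1.2) : False := by
  have h3 := hc.three_le_length
  cases c with
  | nil => simp at h3
  | cons h p =>
    rename_i b
    rw [Walk.cons_isCycle_iff] at hc
    obtain ⟨hp, hedge⟩ := hc
    rw [Walk.length_cons] at h3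
    have hnil : ¬ p.reverse.Nil := by
      rw [Walk.not_nil_iff_lt_length, Walk.length_reverse]; omega
    obtain ⟨y, hy, q, hq⟩ := Walk.not_nil_iff.mp hnil
    have hbsup : b ∈ (Walk.cons h p).support := by
      rw [Walk.support_cons]
      exact List.mem_cons_of_mem _ p.start_mem_support
    have hysup : y ∈ (Walk.cons h p).support := by
      rw [Walk.support_cons]
      refine List.mem_cons_of_mem _ ?_
      have : y ∈ p.reverse.support := by
        rw [hq, Walk.support_cons]
        exact List.mem_cons_of_mem _ q.start_mem_support
      rw [Walk.support_reverse] at this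
      exact List.mem_reverse.mp this
    have hblt : b.1.2 < u.1.2 := lt_of_le_of_ne (hmax b hbsup) (adj_t_ne h).symm
    have hylt : y.1.2 < u.1.2 := lt_of_le_of_ne (hmax y hysup) (adj_t_ne hy).symm
    have hby : b = y := parent_unique h hy hblt hylt
    subst hby
    have hp' : p.reverse.IsPath := hp.reverse
    rw [hq] at hp'
    have hqp : q.IsPath := hp'.of_cons
    have hqnil : q = Walk.nil := (Walk.isPath_iff_eq_nil (p := q)).mp hqp
    rw [hqnil] at hq
    have hlen : p.length = 1 := by
      have := congrArg Walk.length hq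
      rw [Walk.length_reverse] at this
      simpa using this
    omega

lemma acyclic : fareyOdd.IsAcyclic := by
  intro v c hc
  have hne : c.support ≠ [] := c.support_ne_nil
  rcases hm : c.support.argmax (fun x : FareyOddVertex => x.1.2) with _ | u
  · exact hne (List.argmax_eq_none.mp hm)
  · have hu : u ∈ c.support := List.argmax_mem (f := fun x : FareyOddVertex => x.1.2) (l := c.support) (m := u) (Option.mem_def.mpr hm)
    have hmax : ∀ x ∈ c.support, x.1.2 ≤ u.1.2 := fun x hx =>
      List.le_of_mem_argmax (f := fun x : FareyOddVertex => x.1.2) (l := c.support)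
        (a := x) (m := u) hx (Option.mem_def.mpr hm)
    refine max_cycle_aux (c.rotate u hu) (hc.rotate hu) ?_
    intro x hx
    apply hmax
    have hperm := Walk.support_rotate c u hu
    rw [Walk.support_eq_cons] at hx
    rcases List.mem_cons.mp hx with rfl | hx'
    · exact hu
    · exact List.mem_of_mem_tail (hperm.mem_iff.mp hx')

end FareyProof

theorem stmt3 : fareyOdd.IsTree := ⟨FareyProof.connected, FareyProof.acyclic⟩
end

section
/- Let A, B, C, D be groups and let i : C → B and j : C → D be group homomorphisms. Then the pushout in the category of groups of the two homomorphisms id_A × i : A × C → A × B and id_A × j : A × C → A × D is isomorphic to the direct product A × (B *_C D), where B *_C D denotes the pushout of i and j. -/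
universe u

/-- The two-element family of types with value `B` at `false` and `D` at `true`. -/
def pairFam (B D : Type u) : Bool → Type u
  | false => B
  | true => D

instance pairFamGroup (B D : Type u) [Group B] [Group D] : ∀ b, Group (pairFam B D b)
  | false => inferInstanceAs (Group B)
  | true => inferInstanceAs (Group D)

/-- The pair of homomorphisms `i : C →* B` and `j : C →* D`, as a family indexed by `Bool`;
the group pushout of `i` and `j` (the amalgamated free product `B *_C D`) is
`Monoid.PushoutI (pairHom i j)`. -/
def pairHom {C B D : Type u} [Group C] [Group B] [Group D]
    (i : C →* B) (j : C →* D) : ∀ b, C →* pairFam B D b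
  | false => i
  | true => j

namespace Stmt4Aux

open Monoid

variable {A B C D : Type u} [Group A] [Group B] [Group C] [Group D]
  (i : C →* B) (j : C →* D)

/-- the big pushout -/
abbrev P1 (i : C →* B) (j : C →* D) : Type u :=
  PushoutI (pairHom ((MonoidHom.id A).prodMap i) ((MonoidHom.id A).prodMap j))

/-- the small pushout -/
abbrev P2 (i : C →* B) (j : C →* D) : Type u := PushoutI (pairHom i j)

def fwdFam : ∀ b : Bool, pairFam (A × B) (A × D) b →* A × P2 i j
  | false => (MonoidHom.id A).prodMap (PushoutI.of (φ := pairHom i j) false)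
  | true => (MonoidHom.id A).prodMap (PushoutI.of (φ := pairHom i j) true)

def fwd : P1 (A := A) i j →* A × P2 i j :=
  PushoutI.lift (fwdFam i j)
    ((MonoidHom.id A).prodMap (PushoutI.base (pairHom i j)))
    (by
      rintro (_ | _) <;> apply MonoidHom.ext <;> rintro ⟨a, c⟩
      · show ((a : A), (PushoutI.of (φ := pairHom i j) false) (pairHom i j false c))
          = (a, PushoutI.base (pairHom i j) c)
        rw [PushoutI.of_apply_eq_base]
      · show ((a : A), (PushoutI.of (φ := pairHom i j) true) (pairHom i j true c))
          = (a, PushoutI.base (pairHom i j) c)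
        rw [PushoutI.of_apply_eq_base])

@[simp] theorem fwd_of_false (a : A) (x : B) :
    fwd i j (PushoutI.of (φ := pairHom ((MonoidHom.id A).prodMap i) ((MonoidHom.id A).prodMap j))
      false (a, x)) = (a, PushoutI.of (φ := pairHom i j) false x) := by
  rw [fwd]; erw [PushoutI.lift_of]; rfl

@[simp] theorem fwd_of_true (a : A) (x : D) :
    fwd i j (PushoutI.of (φ := pairHom ((MonoidHom.id A).prodMap i) ((MonoidHom.id A).prodMap j))
      true (a, x)) = (a, PushoutI.of (φ := pairHom i j) true x) := by
  rw [fwd]; erw [PushoutI.lift_of]; rfl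

@[simp] theorem fwd_base (a : A) (c : C) :
    fwd i j (PushoutI.base _ (a, c)) = (a, PushoutI.base (pairHom i j) c) := by
  rw [fwd, PushoutI.lift_base]; rfl

theorem base_eq_of_false (a : A) :
    (PushoutI.base (pairHom ((MonoidHom.id A).prodMap i) ((MonoidHom.id A).prodMap j)) (a, 1)
      : P1 i j)
      = PushoutI.of false ((a, 1) : A × B) := by
  rw [← PushoutI.of_apply_eq_base _ false (a, 1)]
  congr 1
  show ((MonoidHom.id A).prodMap i) (a, 1) = (a, 1)
  ext <;> simp

theorem base_eq_of_true (a : A) :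
    (PushoutI.base (pairHom ((MonoidHom.id A).prodMap i) ((MonoidHom.id A).prodMap j)) (a, 1)
      : P1 i j)
      = PushoutI.of true ((a, 1) : A × D) := by
  rw [← PushoutI.of_apply_eq_base _ true (a, 1)]
  congr 1
  show ((MonoidHom.id A).prodMap j) (a, 1) = (a, 1)
  ext <;> simp

def bwdFam : ∀ b : Bool, pairFam B D b →* P1 (A := A) i j
  | false => (PushoutI.of (φ := pairHom ((MonoidHom.id A).prodMap i)
      ((MonoidHom.id A).prodMap j)) false).comp (MonoidHom.inr A B)
  | true => (PushoutI.of (φ := pairHom ((MonoidHom.id A).prodMap i)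
      ((MonoidHom.id A).prodMap j)) true).comp (MonoidHom.inr A D)

def bwdP2 : P2 i j →* P1 (A := A) i j :=
  PushoutI.lift (bwdFam i j)
    ((PushoutI.base _).comp (MonoidHom.inr A C))
    (by
      rintro (_ | _) <;> apply MonoidHom.ext <;> intro c <;>
        simp only [MonoidHom.comp_apply, MonoidHom.inr_apply]
      · rw [← PushoutI.of_apply_eq_base _ false ((1 : A), c)]
        rfl
      · rw [← PushoutI.of_apply_eq_base _ true ((1 : A), c)]
        rfl)

@[simp] theorem bwdP2_of_false (x : B) :
    bwdP2 (A := A) i j (PushoutI.of false x) = PushoutI.of false (((1 : A), x) : A × B) := by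
  rw [bwdP2]; erw [PushoutI.lift_of]

@[simp] theorem bwdP2_of_true (x : D) :
    bwdP2 (A := A) i j (PushoutI.of true x) = PushoutI.of true (((1 : A), x) : A × D) := by
  rw [bwdP2]; erw [PushoutI.lift_of]

@[simp] theorem bwdP2_base (c : C) :
    bwdP2 (A := A) i j (PushoutI.base (pairHom i j) c) = PushoutI.base _ ((1 : A), c) := by
  rw [bwdP2, PushoutI.lift_base]; rfl

theorem comm_aux (a : A) (p : P2 i j) :
    Commute
      (PushoutI.base (pairHom ((MonoidHom.id A).prodMap i) ((MonoidHom.id A).prodMap j)) (a, 1))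
      (bwdP2 i j p) := by
  induction p using PushoutI.induction_on with
  | of b x =>
    cases b
    · erw [bwdP2_of_false, base_eq_of_false i j a]
      change B at x
      have h : Commute ((a, 1) : A × B) (1, x) := by
        unfold Commute SemiconjBy
        ext <;> simp
      exact h.map _
    · erw [bwdP2_of_true, base_eq_of_true i j a]
      change D at x
      have h : Commute ((a, 1) : A × D) (1, x) := by
        unfold Commute SemiconjBy
        ext <;> simp
      exact h.map _
  | base c =>
    rw [bwdP2_base]
    have h : Commute ((a, 1) : A × C) (1, c) := by
      unfold Commute SemiconjBy
      ext <;> simp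
    exact h.map _
  | mul x y hx hy => rw [map_mul]; exact hx.mul_right hy

def bwd : A × P2 i j →* P1 (A := A) i j :=
  MonoidHom.noncommCoprod ((PushoutI.base _).comp (MonoidHom.inl A C)) (bwdP2 i j)
    (fun a p => comm_aux i j a p)

theorem bwd_apply (a : A) (p : P2 i j) :
    bwd (A := A) i j (a, p) = PushoutI.base _ ((a, 1) : A × C) * bwdP2 i j p := rfl

theorem fwd_bwd : (fwd i j).comp (bwd (A := A) i j) = MonoidHom.id _ := by
  apply MonoidHom.ext
  rintro ⟨a, p⟩
  have h2 : fwd i j (bwdP2 (A := A) i j p) = (1, p) := by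
    induction p using PushoutI.induction_on with
    | of b x =>
      cases b
      · change B at x; simp
      · change D at x; simp
    | base c => simp
    | mul x y hx hy => rw [map_mul, map_mul, hx, hy]; ext <;> simp
  simp only [MonoidHom.comp_apply, bwd_apply, map_mul, h2, MonoidHom.id_apply]
  rw [fwd_base]
  ext <;> simp

theorem bwd_fwd : (bwd i j).comp (fwd (A := A) i j) = MonoidHom.id _ := by
  refine Monoid.PushoutI.hom_ext (fun b => MonoidHom.ext fun x => ?_) (MonoidHom.ext fun y => ?_)
  · cases b
    · rcases x with ⟨a, x⟩
      show bwd i j (fwd i j (PushoutI.of false (a, x))) = PushoutI.of false (a, x)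
      erw [fwd_of_false, bwd_apply, bwdP2_of_false, base_eq_of_false i j a, ← map_mul]
      congr 1
      show ((a, 1) : A × B) * (1, x) = (a, x)
      exact Prod.ext (mul_one a) (one_mul x)
    · rcases x with ⟨a, x⟩
      show bwd i j (fwd i j (PushoutI.of true (a, x))) = PushoutI.of true (a, x)
      erw [fwd_of_true, bwd_apply, bwdP2_of_true, base_eq_of_true i j a, ← map_mul]
      congr 1
      show ((a, 1) : A × D) * (1, x) = (a, x)
      exact Prod.ext (mul_one a) (one_mul x)
  · rcases y with ⟨a, c⟩
    simp only [MonoidHom.comp_apply, MonoidHom.id_apply, fwd_base, bwd_apply, bwdP2_base,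
      ← map_mul]
    congr 1
    ext <;> simp

end Stmt4Aux

theorem stmt4 {A B C D : Type u} [Group A] [Group B] [Group C] [Group D]
    (i : C →* B) (j : C →* D) :
    Nonempty
      (Monoid.PushoutI
          (pairHom ((MonoidHom.id A).prodMap i) ((MonoidHom.id A).prodMap j)) ≃*
        A × Monoid.PushoutI (pairHom i j)) := by
  exact ⟨MonoidHom.toMulEquiv (Stmt4Aux.fwd i j) (Stmt4Aux.bwd i j)
    (Stmt4Aux.bwd_fwd i j) (Stmt4Aux.fwd_bwd i j)⟩
end
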